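/- arXiv:1511.03511 — 3 statements merged into one kernel-verified Lean document; each statement's English description precedes it below -/
import Mathlib

section
/- Let A be a symmetric 2n×2n matrix of block form [[0, C],[Cᵗ, 0]] with C a (0,±1)-matrix with no zero row. Then A has exactly two distinct eigenvalues if and only if CCᵗ = CᵗC = γI for some positive real γ (i.e., C is an orthogonal signed matrix). -/
open Matrix

/-- `μ` is an eigenvalue of the real matrix `A`. -/
def IsEigenvalue {n : Type*} [Fintype n] (A : Matrix n n ℝ) (μ : ℝ) : Prop :=
  ∃ v : n → ℝ, v ≠ 0 ∧ A.mulVec v = μ • v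

lemma kill_basis_zero {m : Type*} [Fintype m] [DecidableEq m] (M : Matrix m m ℝ)
    (hA : ∀ v : m → ℝ, M.mulVec v = 0) : M = 0 := by
  ext i j
  have := congrFun (hA (Pi.single j 1)) i
  simpa [Matrix.mulVec_single] using this

lemma two_eig_quad {m : Type*} [Fintype m] [DecidableEq m] (A : Matrix m m ℝ)
    (hA : A.IsHermitian) (lam mu : ℝ)
    (h : ∀ ν, IsEigenvalue A ν → ν = lam ∨ ν = mu) :
    (A - lam • 1) * (A - mu • 1) = 0 := by
  set e := hA.eigenvectorBasis with he
  have hb : ∀ i, ((A - lam • 1) * (A - mu • 1)).mulVec (e i) = 0 := by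
    intro i
    set w : m → ℝ := WithLp.ofLp (e i) with hw
    have hev : A *ᵥ w = hA.eigenvalues i • w := hA.mulVec_eigenvectorBasis i
    have hne : w ≠ 0 := by
      intro h0
      exact hA.eigenvectorBasis.orthonormal.ne_zero i (by ext j; exact congrFun h0 j)
    have hdm : hA.eigenvalues i = lam ∨ hA.eigenvalues i = mu :=
      h _ ⟨w, hne, hev⟩
    show ((A - lam • 1) * (A - mu • 1)) *ᵥ w = 0
    have h1 : (A - mu • 1) *ᵥ w = (hA.eigenvalues i - mu) • w := by
      rw [Matrix.sub_mulVec, hev, Matrix.smul_mulVec, Matrix.one_mulVec, sub_smul]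
    rw [← Matrix.mulVec_mulVec, h1, Matrix.mulVec_smul, Matrix.sub_mulVec, hev,
      Matrix.smul_mulVec, Matrix.one_mulVec, ← sub_smul, smul_smul]
    rcases hdm with h2 | h2 <;> simp [h2]
  apply kill_basis_zero
  intro v
  have hrepr := (e.toBasis).sum_repr (WithLp.toLp 2 v)
  have : ((A - lam • 1) * (A - mu • 1)).mulVecLin v = 0 := by
    show ((A - lam • 1) * (A - mu • 1)).mulVecLin (WithLp.ofLp (WithLp.toLp 2 v)) = 0
    rw [← hrepr, WithLp.ofLp_sum, map_sum]
    apply Finset.sum_eq_zero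
    intro i _
    rw [WithLp.ofLp_smul, _root_.map_smul]
    have h3 : ((A - lam • 1) * (A - mu • 1)).mulVecLin (WithLp.ofLp (e.toBasis i)) = 0 := by
      show ((A - lam • 1) * (A - mu • 1)) *ᵥ WithLp.ofLp (e.toBasis i) = 0
      have : WithLp.ofLp (e.toBasis i) = WithLp.ofLp (e i) := by rw [OrthonormalBasis.coe_toBasis]
      rw [this]; exact hb i
    rw [h3, smul_zero]
  exact this

/-- For a bipartite signed adjacency matrix `A = [[0,C],[Cᵗ,0]]` with `C` a
`(0,±1)`-matrix having no zero row, `A` has exactly two distinct eigenvalues iff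
`CCᵗ = CᵗC = γI` for some `γ > 0`, i.e. `C` is an orthogonal signed matrix. -/
theorem stmt2 {n : ℕ} (hn : 0 < n) (C : Matrix (Fin n) (Fin n) ℝ)
    (hentries : ∀ i j, C i j = 0 ∨ C i j = 1 ∨ C i j = -1)
    (hrow : ∀ i, ∃ j, C i j ≠ 0) :
    (∃ lam mu : ℝ, lam ≠ mu ∧
        IsEigenvalue (fromBlocks 0 C Cᵀ 0) lam ∧
        IsEigenvalue (fromBlocks 0 C Cᵀ 0) mu ∧
        ∀ ν : ℝ, IsEigenvalue (fromBlocks 0 C Cᵀ 0) ν → ν = lam ∨ ν = mu) ↔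
      (∃ γ : ℝ, 0 < γ ∧ C * Cᵀ = γ • (1 : Matrix (Fin n) (Fin n) ℝ) ∧
        Cᵀ * C = γ • (1 : Matrix (Fin n) (Fin n) ℝ)) := by
  set A : Matrix (Fin n ⊕ Fin n) (Fin n ⊕ Fin n) ℝ := fromBlocks 0 C Cᵀ 0 with hA
  have hAA : A * A = fromBlocks (C * Cᵀ) 0 0 (Cᵀ * C) := by
    rw [hA, fromBlocks_multiply]
    simp
  have i0 : Fin n := ⟨0, hn⟩
  obtain ⟨j0, hj0⟩ := hrow i0
  constructor
  · rintro ⟨lam, mu, hlm, -, -, hall⟩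
    have herm : A.IsHermitian := by
      rw [hA, Matrix.isHermitian_fromBlocks_iff]
      refine ⟨Matrix.isHermitian_zero, ?_, rfl, Matrix.isHermitian_zero⟩
      show Cᴴ = Cᵀ
      ext i j
      simp [Matrix.conjTranspose_apply, Matrix.transpose_apply]
    have key := two_eig_quad A herm lam mu hall
    have expand : (A - lam • 1) * (A - mu • 1)
        = A * A - (lam + mu) • A + (lam * mu) • 1 := by
      simp only [sub_mul, mul_sub, smul_mul_assoc, mul_smul_comm, one_mul, mul_one,
        smul_smul, add_smul]
      module
    rw [expand, hAA] at key
    -- extract the off-diagonal block to get lam + mu = 0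
    have h12 := congrFun (congrFun key (Sum.inl i0)) (Sum.inr j0)
    simp [Matrix.fromBlocks_apply₁₂, Matrix.one_apply, hA] at h12
    have hsum : lam + mu = 0 := by
      rcases h12 with h | h
      · exact h
      · exact absurd h hj0
    have hmu : mu = -lam := by linarith
    have hl0 : lam ≠ 0 := by
      intro h0; apply hlm; rw [hmu, h0, neg_zero]
    refine ⟨lam * lam, mul_self_pos.mpr hl0, ?_, ?_⟩
    · ext i j
      have h := congrFun (congrFun key (Sum.inl i)) (Sum.inl j)
      simp [Matrix.fromBlocks_apply₁₁, Matrix.one_apply, hA, hsum, hmu] at h ⊢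
      by_cases hij : i = j <;> simp [hij] at h ⊢ <;> linarith
    · ext i j
      have h := congrFun (congrFun key (Sum.inr i)) (Sum.inr j)
      simp [Matrix.fromBlocks_apply₂₂, Matrix.one_apply, hA, hsum, hmu] at h ⊢
      by_cases hij : i = j <;> simp [hij] at h ⊢ <;> linarith
  · rintro ⟨γ, hγ, h1, h2⟩
    set s := Real.sqrt γ with hsdef
    have hs : 0 < s := Real.sqrt_pos.mpr hγ
    have hss : s * s = γ := Real.mul_self_sqrt hγ.le
    have hAAγ : A * A = γ • 1 := by
      rw [hAA, h1, h2, ← Matrix.fromBlocks_one, Matrix.fromBlocks_smul]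
      simp
    have hsq : ∀ v, A *ᵥ (A *ᵥ v) = γ • v := by
      intro v
      rw [Matrix.mulVec_mulVec, hAAγ, Matrix.smul_mulVec, Matrix.one_mulVec]
    set w : Fin n ⊕ Fin n → ℝ := Pi.single (Sum.inl i0) 1 with hwdef
    set u : Fin n ⊕ Fin n → ℝ := A *ᵥ w with hudef
    have hu0 : u (Sum.inl i0) = 0 := by
      rw [hudef, hwdef, Matrix.mulVec_single]
      simp [hA, Matrix.fromBlocks_apply₁₁]
    have hAu : A *ᵥ u = γ • w := hsq w
    refine ⟨s, -s, by intro h; linarith, ⟨u + s • w, ?_, ?_⟩, ⟨u - s • w, ?_, ?_⟩, ?_⟩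
    · intro h0
      have := congrFun h0 (Sum.inl i0)
      simp [hu0, hwdef] at this
      exact hs.ne' this
    · rw [Matrix.mulVec_add, Matrix.mulVec_smul, hAu, hudef]
      ext k
      simp [← hss, smul_smul]
      ring
    · intro h0
      have := congrFun h0 (Sum.inl i0)
      simp [hu0, hwdef] at this
      exact hs.ne' this
    · rw [Matrix.mulVec_sub, Matrix.mulVec_smul, hAu, hudef]
      ext k
      simp [← hss, smul_smul]
      ring
    · rintro ν ⟨v, hv, hAv⟩
      obtain ⟨k, hk⟩ := Function.ne_iff.mp hv
      have h3 : (ν * ν) • v = γ • v := by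
        rw [← smul_smul, ← hAv, ← Matrix.mulVec_smul, ← hAv, hsq]
      have h4 : ν * ν = γ := by
        have h6 := congrFun h3 k
        rw [Pi.smul_apply, Pi.smul_apply, smul_eq_mul, smul_eq_mul] at h6
        exact mul_right_cancel₀ hk h6
      have h5 : (ν - s) * (ν + s) = 0 := by
        have : ν * ν - s * s = 0 := by rw [h4, hss]; ring
        nlinarith [this]
      rcases mul_eq_zero.mp h5 with h | h
      · left; linarith
      · right; linarith
end

section
/- Let G be a k-regular bipartite graph on parts X, Y each of size n with k ≤ n/2, and suppose λ₂(G) ≤ 2√(k−1) (G is Ramanujan). Then the bipartite complement G_b^c is an (n−k)-regular Ramanujan graph: λ₂(G_b^c) ≤ 2√(n−k−1). -/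
open Matrix

/-- The second largest eigenvalue of the symmetric matrix `A` is at most `b`
(Courant–Fischer formulation). -/
def SecondEigLE {n : Type*} [Fintype n] (A : Matrix n n ℝ) (b : ℝ) : Prop :=
  ∃ v : n → ℝ, v ≠ 0 ∧ ∀ w : n → ℝ, w ⬝ᵥ v = 0 → w ⬝ᵥ A.mulVec w ≤ b * (w ⬝ᵥ w)

theorem quadf {n : ℕ} (M : Matrix (Fin n) (Fin n) ℝ) (w : Fin n ⊕ Fin n → ℝ) :
    w ⬝ᵥ (fromBlocks 0 M Mᵀ 0).mulVec w
      = 2 * ∑ i, ∑ j, w (Sum.inl i) * M i j * w (Sum.inr j) := by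
  simp only [dotProduct, mulVec, Fintype.sum_sum_type, fromBlocks_apply₁₁,
    fromBlocks_apply₁₂, fromBlocks_apply₂₁, fromBlocks_apply₂₂, Matrix.zero_apply,
    transpose_apply, zero_mul, Finset.sum_const_zero, zero_add, add_zero,
    Finset.mul_sum, Finset.sum_mul]
  have h2 : (∑ x : Fin n, ∑ i : Fin n, w (Sum.inr x) * (M i x * w (Sum.inl i)))
      = ∑ x : Fin n, ∑ i : Fin n, w (Sum.inl x) * (M x i * w (Sum.inr i)) := by
    rw [Finset.sum_comm]
    refine Finset.sum_congr rfl fun _ _ => Finset.sum_congr rfl fun _ _ => by ring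
  rw [h2, ← two_mul, Finset.mul_sum]
  refine Finset.sum_congr rfl fun _ _ => ?_
  rw [Finset.mul_sum]
  refine Finset.sum_congr rfl fun _ _ => by ring

theorem dotf {n : ℕ} (w v : Fin n ⊕ Fin n → ℝ) :
    w ⬝ᵥ v = (∑ i, w (Sum.inl i) * v (Sum.inl i)) + ∑ j, w (Sum.inr j) * v (Sum.inr j) := by
  simp [dotProduct, Fintype.sum_sum_type]

theorem expand_sum {n k : ℕ} (B : Matrix (Fin n) (Fin n) ℝ)
    (hrow : ∀ i, ∑ j, B i j = (k : ℝ)) (hcol : ∀ j, ∑ i, B i j = (k : ℝ))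
    (x y : Fin n → ℝ) (a b : ℝ) :
    ∑ i, ∑ j, (a + x i) * B i j * (b + y j)
      = (∑ i, ∑ j, x i * B i j * y j) + b * ((k : ℝ) * ∑ i, x i)
        + a * ((k : ℝ) * ∑ j, y j) + a * b * ((n : ℝ) * k) := by
  have hcolsum : ∀ f : Fin n → ℝ, ∑ i, ∑ j, B i j * f j = (k : ℝ) * ∑ j, f j := by
    intro f
    rw [Finset.sum_comm]
    simp_rw [← Finset.sum_mul, hcol, ← Finset.mul_sum]
  have hrowsum : ∀ f : Fin n → ℝ, ∑ i, ∑ j, f i * B i j = (k : ℝ) * ∑ i, f i := by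
    intro f
    simp_rw [← Finset.mul_sum, hrow]
    rw [← Finset.sum_mul, mul_comm]
  have hS0 : ∑ i : Fin n, ∑ j, B i j = (n : ℝ) * k := by
    simp [hrow, Finset.sum_const, Finset.card_univ, mul_comm]
  calc ∑ i, ∑ j, (a + x i) * B i j * (b + y j)
      = ∑ i, ∑ j, (x i * B i j * y j + (b * (x i * B i j)
          + (a * (B i j * y j) + (a * b) * B i j))) :=
        Finset.sum_congr rfl fun i _ => Finset.sum_congr rfl fun j _ => by ring
    _ = (∑ i, ∑ j, x i * B i j * y j) + ((∑ i, ∑ j, b * (x i * B i j))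
          + ((∑ i, ∑ j, a * (B i j * y j)) + ∑ i, ∑ j, (a * b) * B i j)) := by
        simp_rw [Finset.sum_add_distrib]
    _ = _ := by
        have e1 : (∑ i, ∑ j, b * (x i * B i j)) = b * ((k : ℝ) * ∑ i, x i) := by
          simp_rw [← Finset.mul_sum, hrow]
          rw [← Finset.sum_mul]
          ring
        have e2 : (∑ i, ∑ j, a * (B i j * y j)) = a * ((k : ℝ) * ∑ j, y j) := by
          simp_rw [← Finset.mul_sum]
          rw [hcolsum y]
        have e3 : (∑ i : Fin n, ∑ j, (a * b) * B i j) = a * b * ((n : ℝ) * k) := by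
          simp_rw [← Finset.mul_sum, hrow]
          simp only [Finset.sum_const, Finset.card_univ, Fintype.card_fin, nsmul_eq_mul]
        rw [e1, e2, e3]
        ring

theorem shift_dot {n : ℕ} (f : Fin n → ℝ) (a : ℝ) :
    ∑ i, (a + f i) * (a + f i)
      = (n : ℝ) * (a * a) + 2 * a * (∑ i, f i) + ∑ i, f i * f i := by
  have h : ∀ i, (a + f i) * (a + f i) = a * a + (2 * a * f i + f i * f i) := fun i => by ring
  simp_rw [h, Finset.sum_add_distrib, Finset.sum_const, Finset.card_univ, Fintype.card_fin,
    nsmul_eq_mul, ← Finset.mul_sum]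
  ring

theorem keylem {n k : ℕ} (B : Matrix (Fin n) (Fin n) ℝ)
    (hentries : ∀ i j, B i j = 0 ∨ B i j = 1)
    (hrow : ∀ i, ∑ j, B i j = (k : ℝ)) (hcol : ∀ j, ∑ i, B i j = (k : ℝ))
    (hk : (k : ℝ) ≤ (n : ℝ) / 2)
    (hram : SecondEigLE (fromBlocks 0 B Bᵀ 0) (2 * Real.sqrt ((k : ℝ) - 1)))
    (u : Fin n ⊕ Fin n → ℝ)
    (hu : (∑ i, u (Sum.inl i)) + (∑ j, u (Sum.inr j)) = 0) :
    2 * ∑ i, ∑ j, u (Sum.inl i) * B i j * u (Sum.inr j)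
      ≤ 2 * Real.sqrt ((n : ℝ) - k - 1) * (u ⬝ᵥ u) := by
  have hb' : (0:ℝ) ≤ 2 * Real.sqrt ((n : ℝ) - k - 1) := by positivity
  have huu : (0:ℝ) ≤ u ⬝ᵥ u := by
    rw [dotf]
    have h1 : 0 ≤ ∑ i, u (Sum.inl i) * u (Sum.inl i) :=
      Finset.sum_nonneg fun i _ => mul_self_nonneg _
    have h2 : 0 ≤ ∑ j, u (Sum.inr j) * u (Sum.inr j) :=
      Finset.sum_nonneg fun j _ => mul_self_nonneg _
    linarith
  by_cases hk02 : k = 0 ∨ k = 2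
  · have hkb : (k : ℝ) ≤ 2 * Real.sqrt ((n : ℝ) - k - 1) := by
      rcases hk02 with h | h <;> subst h
      · simpa using hb'
      · push_cast at hk ⊢
        nlinarith [Real.sq_sqrt (by linarith : (0:ℝ) ≤ (n:ℝ) - 2 - 1),
          Real.sqrt_nonneg ((n:ℝ) - 2 - 1)]
    have hterm : ∀ i j, 2 * (u (Sum.inl i) * B i j * u (Sum.inr j))
        ≤ B i j * (u (Sum.inl i) * u (Sum.inl i) + u (Sum.inr j) * u (Sum.inr j)) := by
      intro i j
      rcases hentries i j with h | h <;> rw [h] <;>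
        nlinarith [sq_nonneg (u (Sum.inl i) - u (Sum.inr j))]
    calc 2 * ∑ i, ∑ j, u (Sum.inl i) * B i j * u (Sum.inr j)
        = ∑ i, ∑ j, 2 * (u (Sum.inl i) * B i j * u (Sum.inr j)) := by
          rw [Finset.mul_sum]; simp_rw [Finset.mul_sum]
      _ ≤ ∑ i, ∑ j, B i j * (u (Sum.inl i) * u (Sum.inl i) + u (Sum.inr j) * u (Sum.inr j)) :=
          Finset.sum_le_sum fun i _ => Finset.sum_le_sum fun j _ => hterm i j
      _ = (k : ℝ) * (u ⬝ᵥ u) := by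
          simp_rw [mul_add, Finset.sum_add_distrib]
          have e1 : ∑ i, ∑ j, B i j * (u (Sum.inl i) * u (Sum.inl i))
              = (k : ℝ) * ∑ i, u (Sum.inl i) * u (Sum.inl i) := by
            simp_rw [← Finset.sum_mul, hrow, ← Finset.mul_sum]
          have e2 : ∑ i, ∑ j, B i j * (u (Sum.inr j) * u (Sum.inr j))
              = (k : ℝ) * ∑ j, u (Sum.inr j) * u (Sum.inr j) := by
            rw [Finset.sum_comm]
            simp_rw [← Finset.sum_mul, hcol, ← Finset.mul_sum]
          rw [e1, e2, dotf]
          ring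
      _ ≤ 2 * Real.sqrt ((n : ℝ) - k - 1) * (u ⬝ᵥ u) := mul_le_mul_of_nonneg_right hkb huu
  · push_neg at hk02
    obtain ⟨hk0, hk2⟩ := hk02
    have hk1 : 1 ≤ k := Nat.one_le_iff_ne_zero.mpr hk0
    have hkR : (1:ℝ) ≤ (k : ℝ) := by exact_mod_cast hk1
    have hn2 : (2:ℝ) ≤ (n : ℝ) := by linarith
    have hkβ : 2 * Real.sqrt ((k : ℝ) - 1) < (k : ℝ) := by
      rcases eq_or_lt_of_le hk1 with h | h
      · have hk1' : k = 1 := h.symm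
        subst hk1'
        have h0 : ((1:ℕ):ℝ) - 1 = 0 := by norm_num
        rw [h0, Real.sqrt_zero]
        norm_num
      · have hk3 : 3 ≤ k := by omega
        have hk3R : (3:ℝ) ≤ (k : ℝ) := by exact_mod_cast hk3
        nlinarith [Real.sq_sqrt (by linarith : (0:ℝ) ≤ (k:ℝ) - 1),
          Real.sqrt_nonneg ((k:ℝ) - 1)]
    have hββ : 2 * Real.sqrt ((k : ℝ) - 1) ≤ 2 * Real.sqrt ((n : ℝ) - k - 1) := by
      have := Real.sqrt_le_sqrt (by linarith : (k : ℝ) - 1 ≤ (n : ℝ) - k - 1)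
      linarith
    obtain ⟨v, hv0, hvP⟩ := hram
    by_cases hc1 : (∑ p, v p) = 0
    · exfalso
      have h1v : (fun _ : Fin n ⊕ Fin n => (1:ℝ)) ⬝ᵥ v = 0 := by
        simpa [dotProduct] using hc1
      have hq := hvP _ h1v
      rw [quadf] at hq
      simp only [dotProduct, Fintype.sum_sum_type, one_mul, mul_one] at hq
      simp only [hrow, Finset.sum_const, Finset.card_univ, Fintype.card_fin,
        nsmul_eq_mul, mul_one] at hq
      nlinarith [mul_lt_mul_of_pos_left hkβ (show (0:ℝ) < 2 * (n:ℝ) by linarith)]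
    · obtain ⟨a, ha⟩ : ∃ x : ℝ, x = -(u ⬝ᵥ v) / (∑ p, v p) := ⟨_, rfl⟩
      have hzv : (fun p => a + u p) ⬝ᵥ v = 0 := by
        have hval : (fun p => a + u p) ⬝ᵥ v = a * (∑ p, v p) + u ⬝ᵥ v := by
          simp only [dotProduct, Fintype.sum_sum_type, add_mul, Finset.sum_add_distrib,
            ← Finset.mul_sum]
        rw [hval, ha, div_mul_cancel₀ _ hc1]
        ring
      have hq := hvP _ hzv
      rw [quadf] at hq
      have hQz : ∑ i, ∑ j, (fun p => a + u p) (Sum.inl i) * B i j * (fun p => a + u p) (Sum.inr j)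
          = (∑ i, ∑ j, u (Sum.inl i) * B i j * u (Sum.inr j))
            + a * ((k : ℝ) * ∑ i, u (Sum.inl i)) + a * ((k : ℝ) * ∑ j, u (Sum.inr j))
            + a * a * ((n : ℝ) * k) :=
        expand_sum B hrow hcol (fun i => u (Sum.inl i)) (fun j => u (Sum.inr j)) a a
      have hQzz : (fun p => a + u p) ⬝ᵥ (fun p => a + u p)
          = 2 * (n : ℝ) * (a * a) + 2 * a * ((∑ i, u (Sum.inl i)) + (∑ j, u (Sum.inr j)))
            + u ⬝ᵥ u := by
        simp only [dotProduct, Fintype.sum_sum_type]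
        rw [shift_dot (fun i => u (Sum.inl i)) a, shift_dot (fun j => u (Sum.inr j)) a]
        ring
      rw [hQz, hQzz] at hq
      have hst : (∑ j, u (Sum.inr j)) = -(∑ i, u (Sum.inl i)) := by linarith
      rw [hst] at hq
      generalize hsq1 : Real.sqrt ((k:ℝ) - 1) = q1 at hq hkβ hββ
      generalize hsq2 : Real.sqrt ((n:ℝ) - (k:ℝ) - 1) = q2 at hββ ⊢
      have h1 : 0 ≤ ((k:ℝ) - 2 * q1) * (a * a) * (n:ℝ) :=
        mul_nonneg (mul_nonneg (by linarith) (mul_self_nonneg a)) (by linarith)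
      have h2 : 0 ≤ (2 * q2 - 2 * q1) * (u ⬝ᵥ u) := mul_nonneg (by linarith) huu
      nlinarith [hq, h1, h2]

/-- Let `G` be a `k`-regular bipartite graph with parts of size `n` (`B` is its
biadjacency matrix), `k ≤ n/2`, and `λ₂(G) ≤ 2√(k−1)` (`G` is Ramanujan). Then the
bipartite complement `G_b^c` (biadjacency matrix `J − B`) is `(n−k)`-regular and
Ramanujan: `λ₂(G_b^c) ≤ 2√(n−k−1)`. -/
theorem stmt16 {n k : ℕ} (B : Matrix (Fin n) (Fin n) ℝ)
    (hentries : ∀ i j, B i j = 0 ∨ B i j = 1)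
    (hrow : ∀ i, ∑ j, B i j = (k : ℝ)) (hcol : ∀ j, ∑ i, B i j = (k : ℝ))
    (hk : (k : ℝ) ≤ (n : ℝ) / 2)
    (hram : SecondEigLE (fromBlocks 0 B Bᵀ 0) (2 * Real.sqrt ((k : ℝ) - 1))) :
    (∀ i, ∑ j, ((1 : ℝ) - B i j) = (n : ℝ) - k) ∧
    (∀ j, ∑ i, ((1 : ℝ) - B i j) = (n : ℝ) - k) ∧
    SecondEigLE
      (fromBlocks 0 (Matrix.of fun i j => (1 : ℝ) - B i j)
        (Matrix.of fun i j => (1 : ℝ) - B i j)ᵀ 0)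
      (2 * Real.sqrt ((n : ℝ) - k - 1)) := by
  refine ⟨?_, ?_, ?_⟩
  · intro i
    rw [Finset.sum_sub_distrib, hrow i]
    simp [Finset.sum_const, Finset.card_univ]
  · intro j
    rw [Finset.sum_sub_distrib, hcol j]
    simp [Finset.sum_const, Finset.card_univ]
  · rcases Nat.eq_zero_or_pos n with hn | hn
    · exfalso
      subst hn
      obtain ⟨v, hv0, -⟩ := hram
      refine hv0 (funext fun p => ?_)
      cases p with
      | inl i => exact i.elim0
      | inr j => exact j.elim0
    · refine ⟨fun _ => 1, ?_, ?_⟩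
      · intro h
        have h0 := congrFun h (Sum.inl ⟨0, hn⟩)
        norm_num at h0
      · intro w hw
        have hnR : (0:ℝ) < (n:ℝ) := by exact_mod_cast hn
        obtain ⟨s, hs⟩ : ∃ x : ℝ, x = ∑ i, w (Sum.inl i) := ⟨_, rfl⟩
        obtain ⟨t, ht⟩ : ∃ x : ℝ, x = ∑ j, w (Sum.inr j) := ⟨_, rfl⟩
        obtain ⟨P, hP⟩ : ∃ x : ℝ, x = ∑ i, ∑ j, w (Sum.inl i) * B i j * w (Sum.inr j) :=
          ⟨_, rfl⟩
        have hst : s + t = 0 := by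
          rw [hs, ht]
          simpa [dotProduct, Fintype.sum_sum_type] using hw
        obtain ⟨c, hc⟩ : ∃ x : ℝ, x = s / (n:ℝ) := ⟨_, rfl⟩
        have hcn : c * (n:ℝ) = s := by rw [hc]; field_simp
        have httm : t = -s := by linarith
        -- the shifted/flipped vector
        have h0 : (∑ i, (Sum.elim (fun i => -c + w (Sum.inl i))
              (fun j => -c + -(w (Sum.inr j))) (Sum.inl i) : ℝ))
            + (∑ j, (Sum.elim (fun i => -c + w (Sum.inl i))
              (fun j => -c + -(w (Sum.inr j))) (Sum.inr j) : ℝ)) = 0 := by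
          simp only [Sum.elim_inl, Sum.elim_inr]
          rw [Finset.sum_add_distrib, Finset.sum_add_distrib, Finset.sum_const,
            Finset.card_univ, Fintype.card_fin, nsmul_eq_mul]
          simp only [Finset.sum_neg_distrib]
          rw [← hs, ← ht]
          have : (n:ℝ) * (-c) = -s := by rw [← hcn]; ring
          rw [this]
          linarith
        have hkey := keylem B hentries hrow hcol hk hram
          (Sum.elim (fun i => -c + w (Sum.inl i)) (fun j => -c + -(w (Sum.inr j)))) h0
        simp only [Sum.elim_inl, Sum.elim_inr] at hkey
        have hU0 : ∑ i, ∑ j, (-c + w (Sum.inl i)) * B i j * (-c + -(w (Sum.inr j)))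
            = (∑ i, ∑ j, w (Sum.inl i) * B i j * (-(w (Sum.inr j))))
              + (-c) * ((k:ℝ) * ∑ i, w (Sum.inl i))
              + (-c) * ((k:ℝ) * ∑ j, -(w (Sum.inr j)))
              + (-c) * (-c) * ((n:ℝ) * (k:ℝ)) :=
          expand_sum B hrow hcol _ _ _ _
        have hU : ∑ i, ∑ j, (-c + w (Sum.inl i)) * B i j * (-c + -(w (Sum.inr j)))
            = -P + (-c) * ((k:ℝ) * s) + (-c) * ((k:ℝ) * (-t)) + c * c * ((n:ℝ) * (k:ℝ)) := by
          rw [hU0]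
          simp only [mul_neg, Finset.sum_neg_distrib]
          rw [← hs, ← ht, hP]
          ring
        have hUU : (Sum.elim (fun i => -c + w (Sum.inl i)) (fun j => -c + -(w (Sum.inr j))))
              ⬝ᵥ (Sum.elim (fun i => -c + w (Sum.inl i)) (fun j => -c + -(w (Sum.inr j))))
            = 2 * (n:ℝ) * (c * c) - 2 * c * s + 2 * c * t
              + ((∑ i, w (Sum.inl i) * w (Sum.inl i)) + ∑ j, w (Sum.inr j) * w (Sum.inr j)) := by
          rw [dotf]
          simp only [Sum.elim_inl, Sum.elim_inr]
          have g1 : ∑ i, (-c + w (Sum.inl i)) * (-c + w (Sum.inl i))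
              = (n:ℝ) * ((-c) * (-c)) + 2 * (-c) * (∑ i, w (Sum.inl i))
                + ∑ i, w (Sum.inl i) * w (Sum.inl i) := shift_dot _ _
          have g2 : ∑ j, (-c + -(w (Sum.inr j))) * (-c + -(w (Sum.inr j)))
              = (n:ℝ) * ((-c) * (-c)) + 2 * (-c) * (∑ j, -(w (Sum.inr j)))
                + ∑ j, (-(w (Sum.inr j))) * (-(w (Sum.inr j))) := shift_dot _ _
          rw [g1, g2]
          simp only [Finset.sum_neg_distrib, neg_mul_neg]
          rw [← hs, ← ht]
          ring
        rw [hU, hUU] at hkey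
        -- rewrite the goal
        rw [quadf]
        have hL : ∑ i, ∑ j, w (Sum.inl i) * (Matrix.of fun i j => (1:ℝ) - B i j) i j
              * w (Sum.inr j) = s * t - P := by
          simp only [Matrix.of_apply]
          have e : ∀ i j, w (Sum.inl i) * ((1:ℝ) - B i j) * w (Sum.inr j)
              = w (Sum.inl i) * w (Sum.inr j) - w (Sum.inl i) * B i j * w (Sum.inr j) :=
            fun i j => by ring
          simp_rw [e, Finset.sum_sub_distrib]
          rw [← hP]
          simp_rw [← Finset.mul_sum]
          rw [← Finset.sum_mul, ← hs, ← ht]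
        rw [hL, dotf w w]
        -- final arithmetic
        rw [httm] at hkey ⊢
        have hb' : (0:ℝ) ≤ 2 * Real.sqrt ((n:ℝ) - (k:ℝ) - 1) := by positivity
        have hkn : (k:ℝ) ≤ (n:ℝ) := by linarith
        generalize hq2 : (2 : ℝ) * Real.sqrt ((n:ℝ) - (k:ℝ) - 1) = q2 at hkey hb' ⊢
        have hcs : c * s = c * c * (n:ℝ) := by rw [← hcn]; ring
        have hss : s * s = c * c * ((n:ℝ) * (n:ℝ)) := by rw [← hcn]; ring
        have hp1 : 0 ≤ ((n:ℝ) - (k:ℝ)) * ((n:ℝ) * (c * c)) :=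
          mul_nonneg (by linarith) (mul_nonneg hnR.le (mul_self_nonneg c))
        have hp2 : 0 ≤ q2 * ((n:ℝ) * (c * c)) :=
          mul_nonneg hb' (mul_nonneg hnR.le (mul_self_nonneg c))
        nlinarith [hkey, hcs, hss, hp1, hp2]
end

section
/- For k ≥ 2, the bipartite complement of k disjoint copies of the 4-cycle C₄ has spectrum {±(2k−2), (±2) with multiplicity k−1 each, 0 with multiplicity 2k}, and in particular is a (2k−2)-regular Ramanujan graph. -/
open Matrix Polynomial

section AuxStmt17
open Finset

variable (k : ℕ) [NeZero k]

/-- columns: col 0 = all ones; col q = e₀ - e_q -/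
noncomputable def Mk : Matrix (Fin k) (Fin k) ℝ := fun p q =>
  if q = 0 then 1 else if p = 0 then 1 else if p = q then -1 else 0

noncomputable def Qk : Matrix (Fin k) (Fin k) ℝ := fun q r =>
  (k : ℝ)⁻¹ - if q = r then (if q = 0 then 0 else 1) else 0

lemma Mk_rowsum (p : Fin k) : ∑ q, Mk k p q = if p = 0 then (k : ℝ) else 0 := by
  by_cases hp : p = 0
  · simp [Mk, hp, Finset.card_univ]
  · simp only [hp, if_false]
    have : ∀ q : Fin k, Mk k p q =
        (if q = 0 then (1:ℝ) else 0) + (if q = p then (-1:ℝ) else 0) := by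
      intro q
      by_cases h0 : q = 0
      · simp [Mk, h0, hp, Ne.symm hp]
      · by_cases hq : q = p
        · simp [Mk, h0, hq, hp, eq_comm]
        · simp [Mk, h0, hp, fun h : p = q => hq h.symm, eq_comm (a := q) (b := p), hq]
    rw [Finset.sum_congr rfl fun q _ => this q, Finset.sum_add_distrib]
    simp

lemma Mk_colsum (q : Fin k) : ∑ p, Mk k p q = if q = 0 then (k : ℝ) else 0 := by
  by_cases hq : q = 0
  · simp [Mk, hq, Finset.card_univ]
  · simp only [hq, if_false]
    have : ∀ p : Fin k, Mk k p q =
        (if p = 0 then (1:ℝ) else 0) + (if p = q then (-1:ℝ) else 0) := by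
      intro p
      by_cases h0 : p = 0
      · simp [Mk, hq, h0, fun h : (0:Fin k) = q => hq h.symm, eq_comm]
      · by_cases hp : p = q
        · simp [Mk, hq, h0, hp]
        · simp [Mk, hq, h0, hp]
    rw [Finset.sum_congr rfl fun p _ => this p, Finset.sum_add_distrib]
    simp

lemma MkQk (hk : 0 < k) : Mk k * Qk k = 1 := by
  have hk' : (k : ℝ) ≠ 0 := by positivity
  ext p r
  rw [Matrix.mul_apply]
  have : ∀ q : Fin k, Mk k p q * Qk k q r =
      Mk k p q * (k:ℝ)⁻¹ - Mk k p q * (if q = r then (if q = 0 then 0 else 1) else 0) := by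
    intro q; rw [Qk]; ring
  rw [Finset.sum_congr rfl fun q _ => this q, Finset.sum_sub_distrib, ← Finset.sum_mul,
    Mk_rowsum]
  have h2 : ∑ q, Mk k p q * (if q = r then (if q = 0 then (0:ℝ) else 1) else 0)
      = Mk k p r * (if r = 0 then 0 else 1) := by
    rw [Finset.sum_eq_single r (fun b _ hb => by simp [hb])
      (fun h => absurd (Finset.mem_univ r) h)]
    simp
  rw [h2]
  by_cases hp : p = 0 <;> by_cases hr : r = 0
  · simp [hp, hr, Mk, Matrix.one_apply, hk']
  · simp [hp, hr, Mk, Matrix.one_apply, Ne.symm hr]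
  · simp [hp, hr, Mk, Matrix.one_apply, Ne.symm hp, fun h : p = r => hp (h.trans hr)]
  · by_cases hpr : p = r <;> simp [hp, hr, hpr, Mk, Matrix.one_apply]

/-- entry of the 2×2 Hadamard-type matrix [[1,1],[1,-1]] -/
noncomputable def Hm : Matrix (Fin 2) (Fin 2) ℝ := fun s t => if s = 1 ∧ t = 1 then -1 else 1

lemma Hm_mul (s u : Fin 2) : ∑ t, Hm s t * Hm t u = if s = u then 2 else 0 := by
  fin_cases s <;> fin_cases u <;> simp [Fin.sum_univ_two, Hm] <;> norm_num

lemma Hm_colsum (t : Fin 2) : ∑ u, Hm u t = if t = 0 then 2 else 0 := by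
  fin_cases t <;> simp [Fin.sum_univ_two, Hm] <;> norm_num

noncomputable def MM : Matrix (Fin k × Fin 2) (Fin k × Fin 2) ℝ :=
  fun x y => Mk k x.1 y.1 * Hm x.2 y.2

noncomputable def MMinv : Matrix (Fin k × Fin 2) (Fin k × Fin 2) ℝ :=
  fun x y => Qk k x.1 y.1 * (Hm x.2 y.2 / 2)

noncomputable def BB : Matrix (Fin k × Fin 2) (Fin k × Fin 2) ℝ :=
  fun x y => if x.1 = y.1 then 0 else 1

noncomputable def Lam : Fin k × Fin 2 → ℝ :=
  fun x => if x.2 = 0 then (if x.1 = 0 then 2 * k - 2 else -2) else 0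

lemma MMmul (hk : 0 < k) : MM k * MMinv k = 1 := by
  ext ⟨p, s⟩ ⟨r, u⟩
  rw [Matrix.mul_apply, Fintype.sum_prod_type]
  have : ∀ q : Fin k, ∀ t : Fin 2, MM k (p, s) (q, t) * MMinv k (q, t) (r, u)
      = (Mk k p q * Qk k q r) * ((Hm s t * Hm t u) / 2) := by
    intro q t; simp only [MM, MMinv]; ring
  rw [Finset.sum_congr rfl fun q _ => Finset.sum_congr rfl fun t _ => this q t]
  rw [← Finset.sum_mul_sum]
  have h1 : ∑ q, Mk k p q * Qk k q r = if p = r then 1 else 0 := by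
    have := congrFun (congrFun (MkQk k hk) p) r
    rw [Matrix.mul_apply] at this
    rw [this, Matrix.one_apply]
  have h2 : ∑ t, (Hm s t * Hm t u) / 2 = if s = u then 1 else 0 := by
    rw [← Finset.sum_div, Hm_mul]
    by_cases h : s = u <;> simp [h]
  rw [h1, h2, Matrix.one_apply]
  by_cases h1 : p = r <;> by_cases h2 : s = u <;>
    simp [h1, h2, Prod.ext_iff]

lemma BBMM : BB k * MM k = MM k * Matrix.diagonal (Lam k) := by
  ext ⟨p, s⟩ ⟨q, t⟩
  rw [Matrix.mul_apply, Fintype.sum_prod_type, Matrix.mul_apply,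
    Finset.sum_eq_single (⟨q, t⟩ : Fin k × Fin 2)
      (fun b _ hb => by rw [Matrix.diagonal_apply_ne _ hb, mul_zero])
      (fun h => absurd (Finset.mem_univ _) h)]
  have : ∀ r : Fin k, ∀ u : Fin 2, BB k (p, s) (r, u) * MM k (r, u) (q, t)
      = ((if p = r then 0 else 1) * Mk k r q) * Hm u t := by
    intro r u; simp only [BB, MM]; ring
  rw [Finset.sum_congr rfl fun r _ => Finset.sum_congr rfl fun u _ => this r u]
  rw [← Finset.sum_mul_sum, Hm_colsum]
  have h3 : ∑ r, (if p = r then (0:ℝ) else 1) * Mk k r q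
      = (if q = 0 then (k:ℝ) else 0) - Mk k p q := by
    have : ∀ r : Fin k, (if p = r then (0:ℝ) else 1) * Mk k r q
        = Mk k r q - (if r = p then 1 else 0) * Mk k r q := by
      intro r; by_cases h : p = r <;> simp [h, eq_comm]
    rw [Finset.sum_congr rfl fun r _ => this r, Finset.sum_sub_distrib, Mk_colsum,
      Finset.sum_eq_single p (fun b _ hb => by simp [hb])
        (fun h => absurd (Finset.mem_univ _) h)]
    simp
  rw [h3, Matrix.diagonal_apply_eq]
  simp only [MM, Lam]
  by_cases ht : t = 0
  · subst ht
    have hs : Hm s 0 = 1 := by fin_cases s <;> simp [Hm]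
    simp only [if_pos rfl, hs, mul_one]
    by_cases hq : q = 0
    · simp only [hq, if_pos rfl]
      have : Mk k p 0 = 1 := by simp [Mk]
      rw [this]; push_cast; ring
    · simp only [hq, if_false]
      norm_num
  · simp [ht]

lemma my_charpoly_conj {n R : Type*} [CommRing R] [Fintype n] [DecidableEq n]
    (P Q A : Matrix n n R) (h : P * Q = 1) : (P * A * Q).charpoly = A.charpoly := by
  have hone : (1 : Matrix n n R).map (C : R →+* R[X]) = 1 := by
    simp
  have hc : Matrix.charmatrix (P * A * Q) = P.map C * Matrix.charmatrix A * Q.map C := by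
    simp only [Matrix.charmatrix, RingHom.mapMatrix_apply, Matrix.mul_sub, Matrix.sub_mul]
    congr 1
    · rw [← (Matrix.scalar_commute (X : R[X]) (fun r => Commute.all _ r) (P.map C)).eq,
        Matrix.mul_assoc, ← Matrix.map_mul, h, hone, Matrix.mul_one]
    · rw [← Matrix.map_mul, ← Matrix.map_mul]
  rw [Matrix.charpoly, hc, Matrix.det_mul, Matrix.det_mul, Matrix.charpoly]
  have hmap : P.map (C : R →+* R[X]) * Q.map C = 1 := by rw [← Matrix.map_mul, h, hone]
  have hdet : (P.map (C : R →+* R[X])).det * (Q.map C).det = 1 := by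
    rw [← Matrix.det_mul, hmap, Matrix.det_one]
  calc (P.map (C : R →+* R[X])).det * (Matrix.charmatrix A).det * (Q.map C).det
      = (Matrix.charmatrix A).det * ((P.map C).det * (Q.map C).det) := by ring
    _ = (Matrix.charmatrix A).det := by rw [hdet, mul_one]

lemma my_charpoly_diagonal {n R : Type*} [CommRing R] [Fintype n] [DecidableEq n]
    (d : n → R) : (Matrix.diagonal d).charpoly = ∏ i, (X - C (d i)) := by
  have : Matrix.charmatrix (Matrix.diagonal d) = Matrix.diagonal (fun i => X - C (d i)) := by
    ext i j
    by_cases h : i = j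
    · subst h; rw [Matrix.charmatrix_apply_eq, Matrix.diagonal_apply_eq, Matrix.diagonal_apply_eq]
    · rw [Matrix.charmatrix_apply_ne _ _ _ h, Matrix.diagonal_apply_ne _ h,
        Matrix.diagonal_apply_ne _ h]
      simp
  rw [Matrix.charpoly, this, Matrix.det_diagonal]

lemma A0_charpoly (hk : 0 < k) :
    (fromBlocks 0 (BB k) (BB k) 0).charpoly
      = ∏ i : (Fin k × Fin 2) ⊕ (Fin k × Fin 2),
          (X - C (Sum.elim (Lam k) (fun x => -Lam k x) i)) := by
  set M := MM k with hM
  set N := (2:ℝ)⁻¹ • MMinv k with hN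
  set P := fromBlocks M M M (-M) with hP
  set Q := fromBlocks N N N (-N) with hQ
  set D := fromBlocks (Matrix.diagonal (Lam k)) 0 0 (Matrix.diagonal fun x => -Lam k x) with hD
  have hMN : M * N = (2:ℝ)⁻¹ • (1 : Matrix (Fin k × Fin 2) (Fin k × Fin 2) ℝ) := by
    rw [hN, Matrix.mul_smul, MMmul k hk]
  have h1 : M * N + M * N = 1 := by
    rw [hMN, ← add_smul]; norm_num
  have hPQ : P * Q = 1 := by
    rw [hP, hQ, fromBlocks_multiply]
    simp only [Matrix.mul_neg, Matrix.neg_mul, neg_neg, add_neg_cancel, h1]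
    exact Matrix.fromBlocks_one
  have hdiag : (Matrix.diagonal fun x => -Lam k x)
      = -Matrix.diagonal (Lam k) := by
    ext i j
    rcases eq_or_ne i j with h | h
    · subst h; simp
    · simp [Matrix.diagonal_apply_ne _ h]
  have hAP : fromBlocks 0 (BB k) (BB k) 0 * P = P * D := by
    rw [hP, hD, fromBlocks_multiply, fromBlocks_multiply]
    simp only [Matrix.zero_mul, Matrix.mul_zero, zero_add, add_zero, neg_zero, hdiag,
      Matrix.mul_neg, Matrix.neg_mul, neg_neg, ← hM, BBMM k]
    rw [hM, BBMM k]
  have hA : fromBlocks 0 (BB k) (BB k) 0 = P * D * Q := by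
    calc fromBlocks 0 (BB k) (BB k) 0 = fromBlocks 0 (BB k) (BB k) 0 * (P * Q) := by
          rw [hPQ, Matrix.mul_one]
      _ = (fromBlocks 0 (BB k) (BB k) 0 * P) * Q := by rw [Matrix.mul_assoc]
      _ = P * D * Q := by rw [hAP]
  rw [hA, my_charpoly_conj P Q D hPQ, hD, Matrix.fromBlocks_diagonal, my_charpoly_diagonal]

lemma neg_mul_le_half (a b : ℝ) : -(a * b) ≤ (a ^ 2 + b ^ 2) / 2 := by
  nlinarith [sq_nonneg (a + b)]

lemma prod_if0 (a b : ℝ) :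
    ∏ p : Fin k, (X - C (if p = 0 then a else b)) = (X - C a) * (X - C b) ^ (k - 1) := by
  rw [← Finset.mul_prod_erase Finset.univ _ (Finset.mem_univ (0 : Fin k))]
  rw [if_pos rfl, mul_comm]
  rw [Finset.prod_congr rfl (fun p hp => by rw [if_neg (Finset.ne_of_mem_erase hp)]),
    Finset.prod_const, Finset.card_erase_of_mem (Finset.mem_univ _),
    Finset.card_univ, Fintype.card_fin, mul_comm]

lemma prod_L : ∏ x : Fin k × Fin 2, (X - C (Lam k x))
    = (X - C (2 * (k:ℝ) - 2)) * (X + C 2) ^ (k - 1) * X ^ k := by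
  rw [Fintype.prod_prod_type]
  have h1 : ∀ p : Fin k, ∏ s : Fin 2, (X - C (Lam k (p, s)))
      = (X - C (if p = 0 then 2 * (k:ℝ) - 2 else -2)) * X := by
    intro p; rw [Fin.prod_univ_two]
    simp [Lam]
  rw [Finset.prod_congr rfl fun p _ => h1 p, Finset.prod_mul_distrib, Finset.prod_const,
    Finset.card_univ, Fintype.card_fin, prod_if0]
  have h2 : (X - C (-2:ℝ)) = X + C 2 := by rw [map_neg, sub_neg_eq_add]
  rw [h2]

lemma prod_R : ∏ x : Fin k × Fin 2, (X - C (-Lam k x))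
    = (X + C (2 * (k:ℝ) - 2)) * (X - C 2) ^ (k - 1) * X ^ k := by
  rw [Fintype.prod_prod_type]
  have h1 : ∀ p : Fin k, ∏ s : Fin 2, (X - C (-Lam k (p, s)))
      = (X - C (if p = 0 then -(2 * (k:ℝ) - 2) else 2)) * X := by
    intro p; rw [Fin.prod_univ_two]
    by_cases hp : p = 0 <;> simp [Lam, hp]
  rw [Finset.prod_congr rfl fun p _ => h1 p, Finset.prod_mul_distrib, Finset.prod_const,
    Finset.card_univ, Fintype.card_fin, prod_if0]
  have h2 : (X - C (-(2 * (k:ℝ) - 2))) = X + C (2 * (k:ℝ) - 2) := by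
    rw [map_neg, sub_neg_eq_add]
  rw [h2]

lemma A0_charpoly' (hk : 0 < k) :
    (fromBlocks 0 (BB k) (BB k) 0).charpoly
      = (X - C (2 * (k : ℝ) - 2)) * (X + C (2 * (k : ℝ) - 2)) *
          (X - C 2) ^ (k - 1) * (X + C 2) ^ (k - 1) * X ^ (2 * k) := by
  rw [A0_charpoly k hk, Fintype.prod_sum_type]
  simp only [Sum.elim_inl, Sum.elim_inr]
  rw [prod_L, prod_R]
  ring

def pe : Fin (2 * k) ≃ Fin k × Fin 2 where
  toFun i := (⟨(i : ℕ) / 2, by omega⟩, ⟨(i : ℕ) % 2, by omega⟩)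
  invFun x := ⟨2 * (x.1 : ℕ) + (x.2 : ℕ), by omega⟩
  left_inv i := by
    apply Fin.ext
    show 2 * ((i : ℕ) / 2) + (i : ℕ) % 2 = (i : ℕ)
    omega
  right_inv x := by
    obtain ⟨⟨p, hp⟩, ⟨t, ht⟩⟩ := x
    refine Prod.ext (Fin.ext ?_) (Fin.ext ?_) <;> show _ = _ <;> simp <;> omega

lemma pe_fst_val (i : Fin (2 * k)) : (((pe k) i).1 : ℕ) = (i : ℕ) / 2 := rfl

lemma pe_symm_val (p : Fin k) (t : Fin 2) :
    (((pe k).symm (p, t)) : ℕ) = 2 * (p : ℕ) + (t : ℕ) := rfl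

lemma pe_fst_eq_iff (i j : Fin (2 * k)) :
    ((pe k) i).1 = ((pe k) j).1 ↔ (i : ℕ) / 2 = (j : ℕ) / 2 := by
  rw [Fin.ext_iff, pe_fst_val, pe_fst_val]

lemma sum_transfer (f : Fin (2 * k) → ℝ) :
    ∑ j, f j = ∑ p : Fin k, (f ((pe k).symm (p, 0)) + f ((pe k).symm (p, 1))) := by
  rw [← Equiv.sum_comp (pe k).symm f, Fintype.sum_prod_type]
  exact Finset.sum_congr rfl fun p _ => Fin.sum_univ_two _

lemma pe_symm_div (p : Fin k) (t : Fin 2) : (((pe k).symm (p, t)) : ℕ) / 2 = (p : ℕ) := by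
  rw [pe_symm_val]; omega

lemma rowsum_aux (hk : 0 < k) (a : Fin (2 * k)) :
    ∑ j : Fin (2 * k), (if (a : ℕ) / 2 = (j : ℕ) / 2 then (0:ℝ) else 1)
      = 2 * (k : ℝ) - 2 := by
  have ha2 : (a : ℕ) / 2 < k := by have := a.isLt; omega
  set q0 : Fin k := ⟨(a : ℕ) / 2, ha2⟩ with hq0
  rw [sum_transfer]
  have h1 : ∀ p : Fin k,
      ((if (a : ℕ) / 2 = (((pe k).symm (p, 0)) : ℕ) / 2 then (0:ℝ) else 1)
        + (if (a : ℕ) / 2 = (((pe k).symm (p, 1)) : ℕ) / 2 then (0:ℝ) else 1))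
      = 2 - (if p = q0 then 2 else 0) := by
    intro p
    rw [pe_symm_div, pe_symm_div]
    by_cases h : (a : ℕ) / 2 = (p : ℕ)
    · rw [if_pos h, if_pos (Fin.ext (by simp [hq0, h]))]
      norm_num
    · rw [if_neg h, if_neg (fun hq => h (by simp [hq, hq0]))]
      norm_num
  rw [Finset.sum_congr rfl fun p _ => h1 p, Finset.sum_sub_distrib, Finset.sum_const,
    Finset.sum_ite_eq' Finset.univ q0 (fun _ => (2:ℝ)), if_pos (Finset.mem_univ _),
    Finset.card_univ, Fintype.card_fin, nsmul_eq_mul]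
  ring


end AuxStmt17

/-- For `k ≥ 2`, the bipartite complement of `k` disjoint copies of `C₄`
(whose biadjacency matrix `B'` has `B' i j = 0` iff `i,j` lie in the same pair)
has spectrum `±(2k−2)` once, `±2` each `k−1` times and `0` with multiplicity `2k`
(stated via the characteristic polynomial); in particular it is a `(2k−2)`-regular
Ramanujan graph. -/
theorem stmt17 {k : ℕ} (hk : 2 ≤ k)
    (B' : Matrix (Fin (2 * k)) (Fin (2 * k)) ℝ)
    (hB' : ∀ i j : Fin (2 * k), B' i j = if (i : ℕ) / 2 = (j : ℕ) / 2 then 0 else 1) :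
    (fromBlocks 0 B' B'ᵀ 0).charpoly
        = (X - C (2 * (k : ℝ) - 2)) * (X + C (2 * (k : ℝ) - 2)) *
          (X - C 2) ^ (k - 1) * (X + C 2) ^ (k - 1) * X ^ (2 * k) ∧
    (∀ i, ∑ j, (fromBlocks 0 B' B'ᵀ 0) i j = 2 * (k : ℝ) - 2) ∧
    SecondEigLE (fromBlocks 0 B' B'ᵀ 0) (2 * Real.sqrt (2 * (k : ℝ) - 3)) := by
  haveI : NeZero k := ⟨by omega⟩
  have hk0 : 0 < k := by omega
  have hBt : B'ᵀ = B' := by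
    ext i j
    rw [Matrix.transpose_apply, hB', hB']
    by_cases h : (i : ℕ) / 2 = (j : ℕ) / 2
    · rw [if_pos h, if_pos h.symm]
    · rw [if_neg h, if_neg (fun h' => h h'.symm)]
  refine ⟨?_, ?_, ?_⟩
  · -- charpoly
    have hre : fromBlocks 0 B' B'ᵀ 0
        = Matrix.reindex (Equiv.sumCongr (pe k) (pe k)).symm
            (Equiv.sumCongr (pe k) (pe k)).symm (fromBlocks 0 (BB k) (BB k) 0) := by
      ext i j
      rcases i with a | a <;> rcases j with b | b <;>
        simp only [Matrix.reindex_apply, Matrix.submatrix_apply, Equiv.symm_symm,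
          Equiv.sumCongr_apply, Sum.map_inl, Sum.map_inr, Matrix.fromBlocks_apply₁₁,
          Matrix.fromBlocks_apply₁₂, Matrix.fromBlocks_apply₂₁, Matrix.fromBlocks_apply₂₂,
          Matrix.zero_apply, hBt]
      · rw [hB', BB]
        by_cases h : (a : ℕ) / 2 = (b : ℕ) / 2
        · rw [if_pos h, if_pos ((pe_fst_eq_iff k a b).2 h)]
        · rw [if_neg h, if_neg (fun h' => h ((pe_fst_eq_iff k a b).1 h'))]
      · rw [hB', BB]
        by_cases h : (a : ℕ) / 2 = (b : ℕ) / 2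
        · rw [if_pos h, if_pos ((pe_fst_eq_iff k a b).2 h)]
        · rw [if_neg h, if_neg (fun h' => h ((pe_fst_eq_iff k a b).1 h'))]
    rw [hre, Matrix.charpoly_reindex, A0_charpoly' k hk0]
  · -- row sums
    intro i
    rcases i with a | a
    · rw [Fintype.sum_sum_type]
      simp only [Matrix.fromBlocks_apply₁₁, Matrix.fromBlocks_apply₁₂, Matrix.zero_apply]
      rw [Finset.sum_const_zero, zero_add]
      rw [Finset.sum_congr rfl fun j _ => hB' a j]
      exact rowsum_aux k hk0 a
    · rw [Fintype.sum_sum_type]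
      simp only [Matrix.fromBlocks_apply₂₁, Matrix.fromBlocks_apply₂₂, Matrix.zero_apply,
        Matrix.transpose_apply, hBt]
      rw [Finset.sum_const_zero, add_zero]
      rw [Finset.sum_congr rfl fun j _ => hB' a j]
      exact rowsum_aux k hk0 a
  · -- second eigenvalue
    refine ⟨fun _ => 1, ?_, ?_⟩
    · intro h
      have := congrFun h (Sum.inl ⟨0, by omega⟩)
      simp at this
    intro w hw
    set x : Fin (2 * k) → ℝ := fun a => w (Sum.inl a) with hx
    set y : Fin (2 * k) → ℝ := fun a => w (Sum.inr a) with hy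
    set XX : Fin k → ℝ := fun p => x ((pe k).symm (p, 0)) + x ((pe k).symm (p, 1)) with hXX
    set YY : Fin k → ℝ := fun p => y ((pe k).symm (p, 0)) + y ((pe k).symm (p, 1)) with hYY
    -- the orthogonality constraint
    have hsum : (∑ p, XX p) + (∑ p, YY p) = 0 := by
      have : w ⬝ᵥ (fun _ => 1) = (∑ a, x a) + (∑ a, y a) := by
        rw [dotProduct, Fintype.sum_sum_type]
        simp [hx, hy]
      rw [this] at hw
      rw [sum_transfer k x, sum_transfer k y] at hw
      exact hw
    have hBval : ∀ p q : Fin k, ∀ s t : Fin 2,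
        B' ((pe k).symm (p, s)) ((pe k).symm (q, t)) = if p = q then (0:ℝ) else 1 := by
      intro p q s t
      rw [hB', pe_symm_div, pe_symm_div]
      by_cases h : p = q
      · rw [if_pos (by rw [h]), if_pos h]
      · rw [if_neg (fun h' => h (Fin.ext h')), if_neg h]
    have key : ∑ a, x a * ∑ b, B' a b * y b
        = ∑ p, ∑ q, (if p = q then (0:ℝ) else 1) * (XX p * YY q) := by
      rw [sum_transfer k (fun a => x a * ∑ b, B' a b * y b)]
      refine Finset.sum_congr rfl fun p _ => ?_
      rw [sum_transfer k (fun b => B' ((pe k).symm (p, 0)) b * y b),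
        sum_transfer k (fun b => B' ((pe k).symm (p, 1)) b * y b)]
      rw [Finset.mul_sum, Finset.mul_sum, ← Finset.sum_add_distrib]
      refine Finset.sum_congr rfl fun q _ => ?_
      rw [hBval p q 0 0, hBval p q 0 1, hBval p q 1 0, hBval p q 1 1, hXX, hYY]
      ring
    have key2 : ∑ p, ∑ q, (if p = q then (0:ℝ) else 1) * (XX p * YY q)
        = (∑ p, XX p) * (∑ p, YY p) - ∑ p, XX p * YY p := by
      have hinner : ∀ p, ∑ q, (if p = q then (0:ℝ) else 1) * (XX p * YY q)
          = XX p * (∑ q, YY q) - XX p * YY p := by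
        intro p
        have h0 : ∀ q, (if p = q then (0:ℝ) else 1) * (XX p * YY q)
            = XX p * YY q - (if q = p then XX p * YY q else 0) := by
          intro q
          by_cases h : p = q
          · simp [h]
          · rw [if_neg h, if_neg (fun h' : q = p => h h'.symm), one_mul, sub_zero]
        rw [Finset.sum_congr rfl fun q _ => h0 q, Finset.sum_sub_distrib, ← Finset.mul_sum,
          Finset.sum_ite_eq' Finset.univ p (fun q => XX p * YY q), if_pos (Finset.mem_univ _)]
      rw [Finset.sum_congr rfl fun p _ => hinner p, Finset.sum_sub_distrib, ← Finset.sum_mul]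
    have hmv1 : ∀ a, ((fromBlocks 0 B' B'ᵀ 0).mulVec w) (Sum.inl a) = ∑ b, B' a b * y b := by
      intro a
      rw [Matrix.mulVec, dotProduct, Fintype.sum_sum_type]
      simp [hy]
    have hmv2 : ∀ a, ((fromBlocks 0 B' B'ᵀ 0).mulVec w) (Sum.inr a) = ∑ b, B' b a * x b := by
      intro a
      rw [Matrix.mulVec, dotProduct, Fintype.sum_sum_type]
      simp [hx]
    have hswap : ∑ a, y a * ∑ b, B' b a * x b = ∑ a, x a * ∑ b, B' a b * y b := by
      have l : ∀ a, y a * ∑ b, B' b a * x b = ∑ b, x b * (B' b a * y a) := by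
        intro a
        rw [Finset.mul_sum]
        exact Finset.sum_congr rfl fun b _ => by ring
      rw [Finset.sum_congr rfl fun a _ => l a, Finset.sum_comm]
      exact Finset.sum_congr rfl fun a _ => (Finset.mul_sum _ _ _).symm
    have hquad : w ⬝ᵥ (fromBlocks 0 B' B'ᵀ 0).mulVec w
        = 2 * ((∑ p, XX p) * (∑ p, YY p) - ∑ p, XX p * YY p) := by
      rw [dotProduct, Fintype.sum_sum_type]
      have e1 : ∑ a, w (Sum.inl a) * ((fromBlocks 0 B' B'ᵀ 0).mulVec w) (Sum.inl a)
          = ∑ a, x a * ∑ b, B' a b * y b :=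
        Finset.sum_congr rfl fun a _ => by rw [hmv1 a]
      have e2 : ∑ a, w (Sum.inr a) * ((fromBlocks 0 B' B'ᵀ 0).mulVec w) (Sum.inr a)
          = ∑ a, y a * ∑ b, B' b a * x b :=
        Finset.sum_congr rfl fun a _ => by rw [hmv2 a]
      rw [e1, e2, hswap, key, key2]
      ring
    have hwq : w ⬝ᵥ w
        = (∑ p, (x ((pe k).symm (p, 0)) * x ((pe k).symm (p, 0))
            + x ((pe k).symm (p, 1)) * x ((pe k).symm (p, 1))))
          + ∑ p, (y ((pe k).symm (p, 0)) * y ((pe k).symm (p, 0))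
            + y ((pe k).symm (p, 1)) * y ((pe k).symm (p, 1))) := by
      rw [dotProduct, Fintype.sum_sum_type,
        sum_transfer k (fun a => x a * x a), sum_transfer k (fun a => y a * y a)]
    have hww : 0 ≤ w ⬝ᵥ w := by
      rw [dotProduct]
      exact Finset.sum_nonneg fun i _ => mul_self_nonneg _
    have hle1 : w ⬝ᵥ (fromBlocks 0 B' B'ᵀ 0).mulVec w ≤ 2 * (w ⬝ᵥ w) := by
      rw [hquad]
      have hT : ∑ p, YY p = -∑ p, XX p := by linarith
      have h2 : -∑ p, XX p * YY p ≤ ∑ p, ((XX p)^2 + (YY p)^2) / 2 := by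
        rw [← Finset.sum_neg_distrib]
        exact Finset.sum_le_sum fun p _ => neg_mul_le_half (XX p) (YY p)
      have h3 : ∑ p, ((XX p)^2 + (YY p)^2) / 2 ≤ w ⬝ᵥ w := by
        rw [hwq, ← Finset.sum_add_distrib]
        refine Finset.sum_le_sum fun p _ => ?_
        rw [hXX, hYY]
        nlinarith [sq_nonneg (x ((pe k).symm (p, 0)) - x ((pe k).symm (p, 1))),
          sq_nonneg (y ((pe k).symm (p, 0)) - y ((pe k).symm (p, 1)))]
      rw [hT]
      nlinarith [sq_nonneg (∑ p, XX p), h2, h3]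
    have hs : 1 ≤ Real.sqrt (2 * (k : ℝ) - 3) := by
      have hk2 : (2 : ℝ) ≤ (k : ℝ) := by exact_mod_cast hk
      have : Real.sqrt 1 ≤ Real.sqrt (2 * (k : ℝ) - 3) := Real.sqrt_le_sqrt (by linarith)
      rwa [Real.sqrt_one] at this
    nlinarith [hle1, hww, hs]
end
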